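/- arXiv:1207.7338 — 2 statements merged into one kernel-verified Lean document; each statement's English description precedes it below -/
import Mathlib

section
/- Suppose X ⊆ S for a simple-minded system S in a Hom-finite Krull-Schmidt triangulated k-category T. Then (^⊥X, F(X)) and (F(X), X^⊥) are torsion pairs in T. In particular, F(X) is a functorially finite subcategory of T and F(X) = (^⊥X)^⊥ = ^⊥(X^⊥). -/
open CategoryTheory Limits Pretriangulated

universe v u

variable {C : Type u} [Category.{v} C] [Preadditive C] [HasZeroObject C]
  [HasShift C ℤ] [∀ n : ℤ, (shiftFunctor C n).Additive] [Pretriangulated C]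

/-- The extension class `S * T`: objects `X` admitting a distinguished triangle
`A ⟶ X ⟶ B ⟶ A⟦1⟧` with `A ∈ S` and `B ∈ T`. -/
def extStar (S T : Set C) : Set C :=
  {X | ∃ (A B : C) (f : A ⟶ X) (g : X ⟶ B) (h : B ⟶ A⟦(1:ℤ)⟧),
    Triangle.mk f g h ∈ (distTriang C) ∧ A ∈ S ∧ B ∈ T}

/-- The filtration classes `(S)ₙ`, built from the right. -/
def filt (S : Set C) : ℕ → Set C
  | 0 => {X : C | IsZero X}
  | (n+1) => extStar (filt S n) (S ∪ {X : C | IsZero X})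

/-- The filtration classes `ₙ(S)`, built from the left. -/
def filt' (S : Set C) : ℕ → Set C
  | 0 => {X : C | IsZero X}
  | (n+1) => extStar (S ∪ {X : C | IsZero X}) (filt' S n)

/-- The filtration subcategory `F(S) = ⋃ₙ (S)ₙ` generated by `S`. -/
def filtClosure (S : Set C) : Set C := {X | ∃ n, X ∈ filt S n}

/-- A set of pairwise orthogonal bricks: no nonzero maps between distinct members,
and every endomorphism ring is a division ring. -/
def OrthogonalBricks (S : Set C) : Prop :=
  (∀ X ∈ S, ¬ IsZero X ∧ ∀ f : X ⟶ X, f ≠ 0 → IsIso f) ∧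
  (∀ X ∈ S, ∀ Y ∈ S, X ≠ Y → ∀ f : X ⟶ Y, f = 0)

/-- A simple-minded system: a set of pairwise orthogonal bricks whose extension
closure is the whole category. -/
def SimpleMindedSystem (S : Set C) : Prop :=
  OrthogonalBricks S ∧ ∀ X : C, X ∈ filtClosure S

/-- `S^⊥`: objects receiving no nonzero map from objects of `S`. -/
def rightOrth (S : Set C) : Set C := {Y : C | ∀ X ∈ S, ∀ f : X ⟶ Y, f = 0}

/-- `^⊥S`: objects admitting no nonzero map to objects of `S`. -/
def leftOrth (S : Set C) : Set C := {Y : C | ∀ X ∈ S, ∀ f : Y ⟶ X, f = 0}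

/-- `f : A ⟶ M` is a right `T1`-approximation. -/
def IsRightApprox (T1 : Set C) {A M : C} (f : A ⟶ M) : Prop :=
  ∀ A' ∈ T1, ∀ u : A' ⟶ M, ∃ v : A' ⟶ A, v ≫ f = u

/-- `g : M ⟶ B` is a left `T2`-approximation. -/
def IsLeftApprox (T2 : Set C) {M B : C} (g : M ⟶ B) : Prop :=
  ∀ B' ∈ T2, ∀ u : M ⟶ B', ∃ v : B ⟶ B', g ≫ v = u

/-- `f` is right minimal. -/
def RightMinimal {A M : C} (f : A ⟶ M) : Prop :=
  ∀ u : A ⟶ A, u ≫ f = f → IsIso u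

/-- `g` is left minimal. -/
def LeftMinimal {M B : C} (g : M ⟶ B) : Prop :=
  ∀ u : B ⟶ B, g ≫ u = g → IsIso u

/-- A minimal `(T1,T2)`-triangle: a distinguished triangle `A ⟶ M ⟶ B ⟶ A⟦1⟧` with
`A ∈ T1`, `B ∈ T2`, and `A ⟶ M` a minimal right `T1`-approximation. -/
def MinTriangle (T1 T2 : Set C) {A M B : C} (f : A ⟶ M) (g : M ⟶ B)
    (h : B ⟶ A⟦(1:ℤ)⟧) : Prop :=
  Triangle.mk f g h ∈ (distTriang C) ∧ A ∈ T1 ∧ B ∈ T2 ∧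
    IsRightApprox T1 f ∧ RightMinimal f

/-- A torsion pair `(T1, T2)`: two classes closed under isomorphisms, finite direct
sums and direct summands, containing the zero objects, with no nonzero maps from
`T1` to `T2`, and such that every object fits in a distinguished triangle with
outer terms in `T1` and `T2`. -/
structure TorsionPair [HasBinaryBiproducts C] (T1 T2 : Set C) : Prop where
  iso1 : ∀ {X Y : C}, (X ≅ Y) → X ∈ T1 → Y ∈ T1
  iso2 : ∀ {X Y : C}, (X ≅ Y) → X ∈ T2 → Y ∈ T2
  zero1 : ∀ X : C, IsZero X → X ∈ T1
  zero2 : ∀ X : C, IsZero X → X ∈ T2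
  sum1 : ∀ X Y : C, X ∈ T1 → Y ∈ T1 → (X ⊞ Y) ∈ T1
  sum2 : ∀ X Y : C, X ∈ T2 → Y ∈ T2 → (X ⊞ Y) ∈ T2
  summand1 : ∀ X Y : C, (X ⊞ Y) ∈ T1 → X ∈ T1
  summand2 : ∀ X Y : C, (X ⊞ Y) ∈ T2 → X ∈ T2
  hom_zero : ∀ X ∈ T1, ∀ Y ∈ T2, ∀ f : X ⟶ Y, f = 0
  exists_triangle : ∀ X : C, ∃ (A B : C) (f : A ⟶ X) (g : X ⟶ B) (h : B ⟶ A⟦(1:ℤ)⟧),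
    Triangle.mk f g h ∈ (distTriang C) ∧ A ∈ T1 ∧ B ∈ T2

open ZeroObject

section Helpers

variable {C : Type u} [Category.{v} C] [Preadditive C] [HasZeroObject C]
  [HasShift C ℤ] [∀ n : ℤ, (shiftFunctor C n).Additive] [Pretriangulated C]

lemma unshift_dist {A B D : C} {f : A⟦(1:ℤ)⟧ ⟶ B⟦(1:ℤ)⟧} {g : B⟦(1:ℤ)⟧ ⟶ D⟦(1:ℤ)⟧}
    {h : D⟦(1:ℤ)⟧ ⟶ (A⟦(1:ℤ)⟧)⟦(1:ℤ)⟧} (hT : Triangle.mk f g h ∈ distTriang C) :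
    ∃ (f' : A ⟶ B) (g' : B ⟶ D) (h' : D ⟶ A⟦(1:ℤ)⟧),
      Triangle.mk f' g' h' ∈ distTriang C := by
  have hT' := Triangle.shift_distinguished _ hT (-1)
  set T' := (CategoryTheory.shiftFunctor (Triangle C) (-1)).obj (Triangle.mk f g h) with hT'def
  let eA := (shiftEquiv C (1:ℤ)).unitIso.app A
  let eB := (shiftEquiv C (1:ℤ)).unitIso.app B
  let eD := (shiftEquiv C (1:ℤ)).unitIso.app D
  refine ⟨eA.hom ≫ T'.mor₁ ≫ eB.inv, eB.hom ≫ T'.mor₂ ≫ eD.inv,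
    eD.hom ≫ T'.mor₃ ≫ (eA.inv)⟦(1:ℤ)⟧', ?_⟩
  refine isomorphic_distinguished _ hT' _ (Triangle.isoMk _ _ eA eB eD ?_ ?_ ?_)
  · exact (Category.assoc _ _ _).trans (congrArg (eA.hom ≫ ·) ((Category.assoc _ _ _).trans
      ((congrArg (T'.mor₁ ≫ ·) eB.inv_hom_id).trans (Category.comp_id _))))
  · exact (Category.assoc _ _ _).trans (congrArg (eB.hom ≫ ·) ((Category.assoc _ _ _).trans
      ((congrArg (T'.mor₂ ≫ ·) eD.inv_hom_id).trans (Category.comp_id _))))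
  · exact (Category.assoc _ _ _).trans (congrArg (eD.hom ≫ ·) ((Category.assoc _ _ _).trans
      ((congrArg (T'.mor₃ ≫ ·) (((shiftFunctor C (1:ℤ)).map_comp _ _).symm.trans
        ((congrArg (shiftFunctor C (1:ℤ)).map eA.inv_hom_id).trans ((shiftFunctor C (1:ℤ)).map_id _)))).trans (Category.comp_id _))))

variable {X S : Set C}

lemma filt_iso : ∀ (n : ℕ) {A B : C}, (A ≅ B) → A ∈ filt X n → B ∈ filt X n := by
  intro n
  induction n with
  | zero => intro A B e hA; exact hA.of_iso e.symm
  | succ n _ =>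
    rintro A B e ⟨P, Q, f, g, h, hT, hP, hQ⟩
    exact ⟨P, Q, f ≫ e.hom, e.inv ≫ g, h,
      isomorphic_distinguished _ hT _
        (Triangle.isoMk _ _ (Iso.refl _) e.symm (Iso.refl _) (by simp [Triangle.mk]) (by simp [Triangle.mk]) (by simp [Triangle.mk])),
      hP, hQ⟩

lemma zero_mem_filt {A : C} (hA : IsZero A) : A ∈ filt X 0 := hA

lemma filtClosure_iso {A B : C} (e : A ≅ B) (hA : A ∈ filtClosure X) : B ∈ filtClosure X := by
  obtain ⟨n, hn⟩ := hA; exact ⟨n, filt_iso n e hn⟩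

lemma zero_mem_filtClosure {A : C} (hA : IsZero A) : A ∈ filtClosure X := ⟨0, hA⟩

lemma mem_filt_one {x : C} (hx : x ∈ X) : x ∈ filt X 1 :=
  ⟨0, x, 0, 𝟙 x, 0, contractible_distinguished₁ x, isZero_zero C, Or.inl hx⟩

end Helpers
section Star
variable {C : Type u} [Category.{v} C] [Preadditive C] [HasZeroObject C]
  [HasShift C ℤ] [∀ n : ℤ, (shiftFunctor C n).Additive] [Pretriangulated C]
  [IsTriangulated C] {X S : Set C}

lemma filt_star : ∀ (n : ℕ) (m : ℕ) {A M B : C} (f : A ⟶ M) (g : M ⟶ B) (h : B ⟶ A⟦(1:ℤ)⟧)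
    (hT : Triangle.mk f g h ∈ distTriang C) (hA : A ∈ filt X m) (hB : B ∈ filt X n),
    M ∈ filt X (m + n) := by
  intro n
  induction n with
  | zero =>
    intro m A M B f g h hT hA hB
    have : IsIso f := (Triangle.isZero₃_iff_isIso₁ _ hT).1 hB
    exact filt_iso m (asIso f) hA
  | succ n ih =>
    rintro m A M B f g h hT hA ⟨B₁, b, β, γ, δ, hTB, hB₁, hb⟩
    obtain ⟨N, p, q, hN⟩ := distinguished_cocone_triangle₁ (g ≫ γ : M ⟶ b)
    have h₁₂ : Triangle.mk g h (-(f⟦(1:ℤ)⟧')) ∈ distTriang C := rot_of_distTriang _ hT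
    have h₂₃ : Triangle.mk γ δ (-(β⟦(1:ℤ)⟧')) ∈ distTriang C := rot_of_distTriang _ hTB
    have h₁₃ : Triangle.mk (g ≫ γ) q (-(p⟦(1:ℤ)⟧')) ∈ distTriang C := rot_of_distTriang _ hN
    have O := Triangulated.someOctahedron rfl h₁₂ h₂₃ h₁₃
    obtain ⟨f', g', h', hT'⟩ := unshift_dist O.mem
    have hNmem : N ∈ filt X (m + n) := ih m f' g' h' hT' hA hB₁
    exact ⟨N, b, p, g ≫ γ, q, hN, hNmem, hb⟩

lemma filtClosure_ext {A M B : C} (f : A ⟶ M) (g : M ⟶ B) (h : B ⟶ A⟦(1:ℤ)⟧)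
    (hT : Triangle.mk f g h ∈ distTriang C) (hA : A ∈ filtClosure X) (hB : B ∈ filtClosure X) :
    M ∈ filtClosure X := by
  obtain ⟨m, hm⟩ := hA; obtain ⟨n, hn⟩ := hB
  exact ⟨m + n, filt_star n m f g h hT hm hn⟩

end Star
section Orth
variable {C : Type u} [Category.{v} C] [Preadditive C] [HasZeroObject C]
  [HasShift C ℤ] [∀ n : ℤ, (shiftFunctor C n).Additive] [Pretriangulated C]
  {X S : Set C}

lemma hom_filt_rightOrth : ∀ (n : ℕ) {M Y : C} (_ : M ∈ filt X n) (_ : Y ∈ rightOrth X)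
    (f : M ⟶ Y), f = 0 := by
  intro n
  induction n with
  | zero => intro M Y hM _ f; exact hM.eq_of_src f 0
  | succ n ih =>
    rintro M Y ⟨N, b, a, g, c, hT, hN, hb⟩ hY f
    have h0 : a ≫ f = 0 := ih hN hY _
    obtain ⟨w, hw⟩ := Triangle.yoneda_exact₂ _ hT f h0
    have hw0 : w = 0 := by
      rcases hb with hb | hb
      · exact hY b hb w
      · exact hb.eq_of_src w 0
    rw [hw, hw0]; exact comp_zero

lemma hom_leftOrth_filt : ∀ (n : ℕ) {M Z : C} (_ : M ∈ filt X n) (_ : Z ∈ leftOrth X)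
    (f : Z ⟶ M), f = 0 := by
  intro n
  induction n with
  | zero => intro M Z hM _ f; exact hM.eq_of_tgt f 0
  | succ n ih =>
    rintro M Z ⟨N, b, a, g, c, hT, hN, hb⟩ hZ f
    have h0 : f ≫ g = 0 := by
      rcases hb with hb | hb
      · exact hZ b hb _
      · exact hb.eq_of_tgt _ 0
    obtain ⟨w, hw⟩ := Triangle.coyoneda_exact₂ _ hT f h0
    rw [hw, ih hN hZ w]; exact zero_comp

lemma hom_filtClosure_rightOrth {M Y : C} (hM : M ∈ filtClosure X) (hY : Y ∈ rightOrth X)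
    (f : M ⟶ Y) : f = 0 := by
  obtain ⟨n, hn⟩ := hM; exact hom_filt_rightOrth n hn hY f

lemma hom_leftOrth_filtClosure {M Z : C} (hM : M ∈ filtClosure X) (hZ : Z ∈ leftOrth X)
    (f : Z ⟶ M) : f = 0 := by
  obtain ⟨n, hn⟩ := hM; exact hom_leftOrth_filt n hn hZ f

end Orth
section Claims
variable {C : Type u} [Category.{v} C] [Preadditive C] [HasZeroObject C]
  [HasShift C ℤ] [∀ n : ℤ, (shiftFunctor C n).Additive] [Pretriangulated C]
  [IsTriangulated C] {X S : Set C}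

/-- Distinguished triangle on an isomorphism with zero third object. -/
lemma iso_triangle_dist {x y : C} (φ : x ⟶ y) (hφ : IsIso φ) :
    Triangle.mk φ (0 : y ⟶ (0:C)) (0 : (0:C) ⟶ x⟦(1:ℤ)⟧) ∈ distTriang C := by
  refine isomorphic_distinguished _ (contractible_distinguished x) _ ?_
  exact Triangle.isoMk _ _ (Iso.refl _) (asIso φ).symm (Iso.refl _)
    (by simp [Triangle.mk]; exact (IsIso.hom_inv_id φ).trans (Category.id_comp _).symm)
    (by simp [Triangle.mk]; exact zero_comp.trans comp_zero.symm) (by simp [Triangle.mk]; exact zero_comp.symm)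

/-- Length drop for the cone of a nonzero map from a brick into a filtered object. -/
lemma cone_mem_filt (hB : OrthogonalBricks S) :
    ∀ (n : ℕ) {M x : C} (_ : x ∈ S) (_ : M ∈ filt S (n+1)) {u : x ⟶ M} (_ : u ≠ 0)
    {Cu : C} (p : M ⟶ Cu) (q : Cu ⟶ x⟦(1:ℤ)⟧) (_ : Triangle.mk u p q ∈ distTriang C),
    Cu ∈ filt S n := by
  intro n
  induction n using Nat.strong_induction_on with
  | _ n ih =>
  rintro M x hx ⟨N, s, a, b, c, hTN, hN, hs⟩ u hu Cu p q hT
  by_cases h0 : u ≫ b = 0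
  · obtain ⟨v, hv⟩ := Triangle.coyoneda_exact₂ _ hTN u h0
    have hvne : v ≠ 0 := fun hv0 => hu (by rw [hv, hv0]; exact zero_comp)
    cases n with
    | zero => exact absurd (hN.eq_of_tgt v 0) hvne
    | succ k =>
      obtain ⟨Cv, pv, qv, hTv⟩ := distinguished_cocone_triangle v
      have hCv : Cv ∈ filt S k := ih k (Nat.lt_succ_self k) hx hN hvne pv qv hTv
      have O := Triangulated.someOctahedron hv.symm hTv hTN hT
      exact ⟨Cv, s, O.m₁, O.m₃, _, O.mem, hCv, hs⟩
  · have hsS : s ∈ S := by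
      rcases hs with hs | hs
      · exact hs
      · exact absurd (hs.eq_of_tgt (u ≫ b) 0) h0
    have hxs : x = s := by
      by_contra hne
      exact h0 (hB.2 x hx s hsS hne (u ≫ b))
    subst hxs
    have hφ : IsIso (u ≫ b) := (hB.1 x hx).2 _ h0
    have h₂₃ : Triangle.mk b c (-(a⟦(1:ℤ)⟧')) ∈ distTriang C := rot_of_distTriang _ hTN
    have O := Triangulated.someOctahedron rfl hT h₂₃ (iso_triangle_dist (u ≫ b) hφ)
    have hiso : IsIso ((-(a⟦(1:ℤ)⟧')) ≫ p⟦(1:ℤ)⟧') :=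
      (Triangle.isZero₂_iff_isIso₃ _ O.mem).1 (isZero_zero C)
    exact filt_iso _ ((shiftFunctor C (1:ℤ)).preimageIso
      (asIso ((-(a⟦(1:ℤ)⟧')) ≫ p⟦(1:ℤ)⟧'))) hN

end Claims
section Claims2
variable {C : Type u} [Category.{v} C] [Preadditive C] [HasZeroObject C]
  [HasShift C ℤ] [∀ n : ℤ, (shiftFunctor C n).Additive] [Pretriangulated C]
  [IsTriangulated C] {X S : Set C}

/-- Length drop for the fiber of a nonzero map from a filtered object to a brick. -/
lemma fib_mem_filt (hB : OrthogonalBricks S) (hXS : X ⊆ S) :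
    ∀ (n : ℕ) {M x : C} (_ : x ∈ S) (_ : M ∈ filt X (n+1)) {v : M ⟶ x} (_ : v ≠ 0)
    {F : C} (i : F ⟶ M) (w : x ⟶ F⟦(1:ℤ)⟧) (_ : Triangle.mk i v w ∈ distTriang C),
    F ∈ filt X n := by
  intro n
  induction n using Nat.strong_induction_on with
  | _ n ih =>
  rintro M x hx ⟨N, s, a, b, c, hTN, hN, hs⟩ v hv F i w hT
  have hTrot : Triangle.mk v w (-(i⟦(1:ℤ)⟧')) ∈ distTriang C := rot_of_distTriang _ hT
  by_cases h0 : a ≫ v = 0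
  · obtain ⟨w', hw'⟩ := Triangle.yoneda_exact₂ _ hTN v h0
    have hw'ne : w' ≠ 0 := fun hz => hv (by rw [hw', hz]; exact comp_zero)
    have hsX : s ∈ X := by
      rcases hs with hs | hs
      · exact hs
      · exact absurd (hs.eq_of_src w' 0) hw'ne
    have hsx : s = x := by
      by_contra hne
      exact hw'ne (hB.2 s (hXS hsX) x hx hne w')
    subst hsx
    have hφ : IsIso w' := (hB.1 s (hXS hsX)).2 _ hw'ne
    have h₁₂ : Triangle.mk b c (-(a⟦(1:ℤ)⟧')) ∈ distTriang C := rot_of_distTriang _ hTN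
    have O := Triangulated.someOctahedron hw'.symm h₁₂ (iso_triangle_dist w' hφ) hTrot
    have hiso : IsIso O.m₁ :=
      (Triangle.isZero₃_iff_isIso₁ _ O.mem).1 (isZero_zero C)
    exact filt_iso _ ((shiftFunctor C (1:ℤ)).preimageIso (asIso O.m₁)) hN
  · cases n with
    | zero =>
      refine absurd ?_ h0
      have : a = 0 := hN.eq_of_src a 0
      rw [this, zero_comp]
    | succ k =>
      obtain ⟨F', i', w'', hF'⟩ := distinguished_cocone_triangle₁ (a ≫ v)
      have hF'mem : F' ∈ filt X k := ih k (Nat.lt_succ_self k) hx hN h0 i' w'' hF'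
      have h₁₃ : Triangle.mk (a ≫ v) w'' (-(i'⟦(1:ℤ)⟧')) ∈ distTriang C :=
        rot_of_distTriang _ hF'
      have O := Triangulated.someOctahedron rfl hTN hTrot h₁₃
      obtain ⟨f', g', h', hU⟩ := unshift_dist (rot_of_distTriang _ O.mem)
      exact ⟨F', s, f', g', h', hU, hF'mem, hs⟩

end Claims2
section Retract
variable {C : Type u} [Category.{v} C] [Preadditive C] [HasZeroObject C]
  [HasShift C ℤ] [∀ n : ℤ, (shiftFunctor C n).Additive] [Pretriangulated C]
  [IsTriangulated C] {X S : Set C}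

/-- The filtration closure is closed under retracts. -/
lemma retract_mem_filtClosure (hB : OrthogonalBricks S) (hXS : X ⊆ S) :
    ∀ (n : ℕ) {P M : C} (_ : P ∈ filt X n) (i : M ⟶ P) (p : P ⟶ M) (_ : i ≫ p = 𝟙 M),
    M ∈ filtClosure X := by
  intro n
  induction n using Nat.strong_induction_on with
  | _ n ih =>
  intro P M hP i p hip
  cases n with
  | zero =>
    refine zero_mem_filtClosure ?_
    rw [IsZero.iff_id_eq_zero, ← hip, hP.eq_of_tgt i 0, zero_comp]
  | succ k =>
  obtain ⟨Q, s, a, b, c, hTQ, hQ, hs⟩ := hP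
  by_cases hc : i ≫ b = 0
  · obtain ⟨j, hj⟩ := Triangle.coyoneda_exact₂ _ hTQ i hc
    have hj' : i = j ≫ a := hj
    refine ih k (Nat.lt_succ_self k) hQ j (a ≫ p) ?_
    exact (Category.assoc _ _ _).symm.trans ((congrArg (· ≫ p) hj'.symm).trans hip)
  · have hsX : s ∈ X := by
      rcases hs with hs | hs
      · exact hs
      · exact absurd (hs.eq_of_tgt (i ≫ b) 0) hc
    obtain ⟨F, f, w₁, hF⟩ := distinguished_cocone_triangle₁ (i ≫ b)
    obtain ⟨G, g, w₂, hG⟩ := distinguished_cocone_triangle₁ (p ≫ i ≫ b)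
    have hvne : p ≫ i ≫ b ≠ 0 := fun hz => hc (by
      have := congrArg (fun t => i ≫ t) hz
      simpa [← Category.assoc, hip] using this)
    have hGmem : G ∈ filt X k :=
      fib_mem_filt hB hXS k (hXS hsX) ⟨Q, s, a, b, c, hTQ, hQ, hs⟩ hvne g w₂ hG
    obtain ⟨α₀, hα₁, hα₂⟩ := complete_distinguished_triangle_morphism₁ _ _ hF hG i (𝟙 s)
      (by simp [Triangle.mk, reassoc_of% hip])
    obtain ⟨β₀, hβ₁, hβ₂⟩ := complete_distinguished_triangle_morphism₁ _ _ hG hF p (𝟙 s)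
      (by simp [Triangle.mk])
    let α : F ⟶ G := α₀
    let β : G ⟶ F := β₀
    have hα₁' : f ≫ i = α ≫ g := hα₁
    have hα₂' : w₁ ≫ α⟦(1:ℤ)⟧' = 𝟙 s ≫ w₂ := hα₂
    have hβ₁' : g ≫ p = β ≫ f := hβ₁
    have hβ₂' : w₂ ≫ β⟦(1:ℤ)⟧' = 𝟙 s ≫ w₁ := hβ₂
    rw [Category.id_comp] at hα₂' hβ₂'
    have hδf : (α ≫ β) ≫ f = f := by
      rw [Category.assoc, ← hβ₁', ← Category.assoc, ← hα₁', Category.assoc, hip,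
        Category.comp_id]
    have hwδ : w₁ ≫ (α ≫ β)⟦(1:ℤ)⟧' = w₁ := by
      rw [Functor.map_comp, ← Category.assoc, hα₂', hβ₂']
    set ε : F ⟶ F := α ≫ β - 𝟙 F with hε
    have hεf : ε ≫ f = 0 := by rw [hε, Preadditive.sub_comp, hδf, Category.id_comp, sub_self]
    have hwε : w₁ ≫ ε⟦(1:ℤ)⟧' = 0 := by
      rw [hε, Functor.map_sub, Preadditive.comp_sub, hwδ, CategoryTheory.Functor.map_id, Category.comp_id,
        sub_self]
    have hcomp0 : ε⟦(1:ℤ)⟧' ≫ ((Triangle.mk f (i ≫ b) w₁).mor₁)⟦(1:ℤ)⟧' = 0 := by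
      refine ((shiftFunctor C (1:ℤ)).map_comp _ _).symm.trans ?_
      show (ε ≫ f)⟦(1:ℤ)⟧' = 0
      rw [hεf, Functor.map_zero]
    obtain ⟨τ, hτ⟩ := Triangle.coyoneda_exact₁ _ hF (ε⟦(1:ℤ)⟧') hcomp0
    have hτ' : ε⟦(1:ℤ)⟧' = τ ≫ w₁ := hτ
    have hε2 : ε ≫ ε = 0 := by
      have hsh : (ε ≫ ε)⟦(1:ℤ)⟧' = 0 := by
        rw [Functor.map_comp]
        nth_rewrite 1 [hτ']
        exact (Category.assoc _ _ _).trans ((congrArg (τ ≫ ·) hwε).trans comp_zero)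
      exact (shiftFunctor C (1:ℤ)).map_eq_zero_iff.1 hsh
    have hδiso : IsIso (α ≫ β) := by
      have hδε : α ≫ β = 𝟙 F + ε := by rw [hε]; abel
      refine ⟨𝟙 F - ε, ?_, ?_⟩
      · rw [hδε]
        simp only [Preadditive.comp_sub, Preadditive.add_comp, Preadditive.sub_comp,
          Category.id_comp, Category.comp_id, hε2]
        abel
      · rw [hδε]
        simp only [Preadditive.comp_sub, Preadditive.add_comp, Preadditive.comp_add,
          Preadditive.sub_comp, Category.id_comp, Category.comp_id, hε2]
        abel
    have hFmem : F ∈ filtClosure X := by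
      refine ih k (Nat.lt_succ_self k) hGmem α (β ≫ inv (α ≫ β)) ?_
      rw [← Category.assoc, IsIso.hom_inv_id]
    obtain ⟨m, hm⟩ := hFmem
    exact ⟨m + 1, F, s, f, i ≫ b, w₁, hF, hm, Or.inl hsX⟩

end Retract
section Main
variable {C : Type u} [Category.{v} C] [Preadditive C] [HasZeroObject C]
  [HasShift C ℤ] [∀ n : ℤ, (shiftFunctor C n).Additive] [Pretriangulated C]
  [IsTriangulated C] {X S : Set C}

lemma exists_triangle_filt_rightOrth_aux (hB : OrthogonalBricks S) (hXS : X ⊆ S) :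
    ∀ (n : ℕ) (M : C) (_ : M ∈ filt S n),
    ∃ (A B : C) (f : A ⟶ M) (g : M ⟶ B) (h : B ⟶ A⟦(1:ℤ)⟧),
      Triangle.mk f g h ∈ (distTriang C) ∧ A ∈ filtClosure X ∧ B ∈ rightOrth X := by
  intro n
  induction n using Nat.strong_induction_on with
  | _ n ih =>
  intro M hn
  by_cases hM : M ∈ rightOrth X
  · exact ⟨0, M, 0, 𝟙 M, 0, contractible_distinguished₁ M,
      zero_mem_filtClosure (isZero_zero C), hM⟩
  · have hex : ∃ x ∈ X, ∃ u : x ⟶ M, u ≠ 0 := by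
      by_contra hcon
      push_neg at hcon
      exact hM (fun x hx f => by
        exact hcon x hx f)
    obtain ⟨x, hx, u, hu⟩ := hex
    cases n with
    | zero => exact absurd (hn.eq_of_tgt u 0) hu
    | succ k =>
      obtain ⟨M', pm, qm, hMT⟩ := distinguished_cocone_triangle u
      have hM' : M' ∈ filt S k := cone_mem_filt hB k (hXS hx) hn hu pm qm hMT
      obtain ⟨A', B', f', g', h', hTA, hA', hB'⟩ := ih k (Nat.lt_succ_self k) M' hM'
      obtain ⟨W, ww, qw, hW⟩ := distinguished_cocone_triangle₁ (pm ≫ g')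
      have h₁₂ : Triangle.mk pm qm (-(u⟦(1:ℤ)⟧')) ∈ distTriang C := rot_of_distTriang _ hMT
      have h₂₃ : Triangle.mk g' h' (-(f'⟦(1:ℤ)⟧')) ∈ distTriang C := rot_of_distTriang _ hTA
      have h₁₃ : Triangle.mk (pm ≫ g') qw (-(ww⟦(1:ℤ)⟧')) ∈ distTriang C :=
        rot_of_distTriang _ hW
      have O := Triangulated.someOctahedron rfl h₁₂ h₂₃ h₁₃
      obtain ⟨f2, g2, h2, hU⟩ := unshift_dist O.mem
      obtain ⟨m, hm⟩ := hA'
      have hWmem : W ∈ filt X (1 + m) := filt_star m 1 f2 g2 h2 hU (mem_filt_one hx) hm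
      exact ⟨W, B', ww, pm ≫ g', qw, hW, ⟨1 + m, hWmem⟩, hB'⟩

lemma exists_triangle_leftOrth_filt_aux (hB : OrthogonalBricks S) (hXS : X ⊆ S) :
    ∀ (n : ℕ) (M : C) (_ : M ∈ filt S n),
    ∃ (A B : C) (f : A ⟶ M) (g : M ⟶ B) (h : B ⟶ A⟦(1:ℤ)⟧),
      Triangle.mk f g h ∈ (distTriang C) ∧ A ∈ leftOrth X ∧ B ∈ filtClosure X := by
  intro n
  induction n using Nat.strong_induction_on with
  | _ n ih =>
  intro M hn
  by_cases hM : M ∈ leftOrth X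
  · exact ⟨M, 0, 𝟙 M, 0, 0, contractible_distinguished M, hM,
      zero_mem_filtClosure (isZero_zero C)⟩
  · have hex : ∃ x ∈ X, ∃ v : M ⟶ x, v ≠ 0 := by
      by_contra hcon
      push_neg at hcon
      exact hM (fun x hx f => by
        exact hcon x hx f)
    obtain ⟨x, hx, v, hv⟩ := hex
    cases n with
    | zero => exact absurd (hn.eq_of_src v 0) hv
    | succ k =>
      obtain ⟨F, fv, wv, hF⟩ := distinguished_cocone_triangle₁ v
      have hFmem : F ∈ filt S k :=
        fib_mem_filt hB (subset_refl S) k (hXS hx) hn hv fv wv hF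
      obtain ⟨A, B, a', b', c', hTA, hA, hB'⟩ := ih k (Nat.lt_succ_self k) F hFmem
      obtain ⟨V, pv2, qv2, hV⟩ := distinguished_cocone_triangle (a' ≫ fv)
      have O := Triangulated.someOctahedron rfl hTA hF hV
      obtain ⟨m, hm⟩ := hB'
      have hVmem : V ∈ filt X (m + 1) := ⟨B, x, O.m₁, O.m₃, _, O.mem, hm, Or.inl hx⟩
      exact ⟨A, V, a' ≫ fv, pv2, qv2, hV, hA, ⟨m + 1, hVmem⟩⟩

end Main
section Eq
variable {C : Type u} [Category.{v} C] [Preadditive C] [HasZeroObject C]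
  [HasShift C ℤ] [∀ n : ℤ, (shiftFunctor C n).Additive] [Pretriangulated C]
  [IsTriangulated C] {X S : Set C}

lemma filtClosure_eq_leftOrth_rightOrth (hS : SimpleMindedSystem S) (hXS : X ⊆ S) :
    filtClosure X = leftOrth (rightOrth X) := by
  apply Set.eq_of_subset_of_subset
  · intro M hM Y hY f
    exact hom_filtClosure_rightOrth hM hY f
  · intro M hM
    obtain ⟨n, hn⟩ := hS.2 M
    obtain ⟨A, B, f, g, h, hT, hA, hB⟩ :=
      exists_triangle_filt_rightOrth_aux hS.1 hXS n M hn
    have hg : g = 0 := hM B hB g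
    obtain ⟨s, hs⟩ := Triangle.coyoneda_exact₂ _ hT (𝟙 M) (by show 𝟙 M ≫ g = 0; rw [hg, comp_zero])
    obtain ⟨m, hm⟩ := hA
    exact retract_mem_filtClosure hS.1 hXS m hm s f hs.symm

lemma filtClosure_eq_rightOrth_leftOrth (hS : SimpleMindedSystem S) (hXS : X ⊆ S) :
    filtClosure X = rightOrth (leftOrth X) := by
  apply Set.eq_of_subset_of_subset
  · intro M hM Z hZ f
    exact hom_leftOrth_filtClosure hM hZ f
  · intro M hM
    obtain ⟨n, hn⟩ := hS.2 M
    obtain ⟨A, B, f, g, h, hT, hA, hB⟩ :=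
      exists_triangle_leftOrth_filt_aux hS.1 hXS n M hn
    have hf : f = 0 := hM A hA f
    obtain ⟨t, ht⟩ := Triangle.yoneda_exact₂ _ hT (𝟙 M) (by show f ≫ 𝟙 M = 0; rw [hf, zero_comp])
    obtain ⟨m, hm⟩ := hB
    exact retract_mem_filtClosure hS.1 hXS m hm g t ht.symm

end Eq
/-- for `X ⊆ S` with `S` a simple-minded system, `(^⊥X, F(X))` and
`(F(X), X^⊥)` are torsion pairs; in particular `F(X)` is functorially finite and
`F(X) = (^⊥X)^⊥ = ^⊥(X^⊥)`. -/
theorem sms_subset_torsionPairs [IsTriangulated C] [HasBinaryBiproducts C] (k : Type*) [Field k] [Linear k C]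
    (hfin : ∀ X Y : C, Module.Finite k (X ⟶ Y)) [IsIdempotentComplete C]
    (S X : Set C) (hS : SimpleMindedSystem S) (hX : X ⊆ S) :
    TorsionPair (leftOrth X) (filtClosure X) ∧
    TorsionPair (filtClosure X) (rightOrth X) ∧
    (∀ M : C, ∃ (A : C) (f : A ⟶ M), A ∈ filtClosure X ∧ IsRightApprox (filtClosure X) f) ∧
    (∀ M : C, ∃ (B : C) (g : M ⟶ B), B ∈ filtClosure X ∧ IsLeftApprox (filtClosure X) g) ∧
    filtClosure X = rightOrth (leftOrth X) ∧
    filtClosure X = leftOrth (rightOrth X) := by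
  have hB := hS.1
  -- closure properties of the orthogonals
  have lo_iso : ∀ {P Q : C}, (P ≅ Q) → P ∈ leftOrth X → Q ∈ leftOrth X := by
    intro P Q e hP x hx f
    have h0 : e.hom ≫ f = 0 := hP x hx _
    calc f = e.inv ≫ (e.hom ≫ f) := by simp
    _ = 0 := by rw [h0, comp_zero]
  have ro_iso : ∀ {P Q : C}, (P ≅ Q) → P ∈ rightOrth X → Q ∈ rightOrth X := by
    intro P Q e hP x hx f
    have h0 : f ≫ e.inv = 0 := hP x hx _
    calc f = (f ≫ e.inv) ≫ e.hom := by simp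
    _ = 0 := by rw [h0, zero_comp]
  have fc_iso : ∀ {P Q : C}, (P ≅ Q) → P ∈ filtClosure X → Q ∈ filtClosure X :=
    fun e hP => filtClosure_iso e hP
  have fc_sum : ∀ P Q : C, P ∈ filtClosure X → Q ∈ filtClosure X →
      (P ⊞ Q) ∈ filtClosure X := by
    intro P Q hP hQ
    exact filtClosure_ext biprod.inl biprod.snd 0
      (binaryBiproductTriangle_distinguished P Q) hP hQ
  have fc_summand : ∀ P Q : C, (P ⊞ Q) ∈ filtClosure X → P ∈ filtClosure X := by
    intro P Q hPQ
    obtain ⟨n, hn⟩ := hPQ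
    exact retract_mem_filtClosure hB hX n hn biprod.inl biprod.fst biprod.inl_fst
  -- torsion pair 1
  have tp1 : TorsionPair (leftOrth X) (filtClosure X) := by
    refine ⟨fun e hP => lo_iso e hP, fun e hP => fc_iso e hP,
      fun P hP x hx f => hP.eq_of_src f 0, fun P hP => zero_mem_filtClosure hP,
      ?_, fc_sum, ?_, fc_summand, fun P hP Q hQ f => hom_leftOrth_filtClosure hQ hP f, ?_⟩
    · intro P Q hP hQ x hx f
      apply biprod.hom_ext' <;> simp [hP x hx _, hQ x hx _]
    · intro P Q hPQ x hx f
      have h0 : biprod.fst ≫ f = 0 := hPQ x hx _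
      calc f = biprod.inl ≫ biprod.fst ≫ f := by simp
      _ = 0 := by rw [h0, comp_zero]
    · intro M
      obtain ⟨n, hn⟩ := hS.2 M
      exact exists_triangle_leftOrth_filt_aux hB hX n M hn
  -- torsion pair 2
  have tp2 : TorsionPair (filtClosure X) (rightOrth X) := by
    refine ⟨fun e hP => fc_iso e hP, fun e hP => ro_iso e hP,
      fun P hP => zero_mem_filtClosure hP, fun P hP x hx f => hP.eq_of_tgt f 0,
      fc_sum, ?_, fc_summand, ?_, fun P hP Q hQ f => hom_filtClosure_rightOrth hP hQ f, ?_⟩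
    · intro P Q hP hQ x hx f
      apply biprod.hom_ext <;> simp [hP x hx _, hQ x hx _]
    · intro P Q hPQ x hx f
      have h0 : f ≫ biprod.inl = 0 := hPQ x hx _
      calc f = (f ≫ biprod.inl) ≫ biprod.fst := by simp
      _ = 0 := by rw [h0, zero_comp]
    · intro M
      obtain ⟨n, hn⟩ := hS.2 M
      exact exists_triangle_filt_rightOrth_aux hB hX n M hn
  refine ⟨tp1, tp2, ?_, ?_, filtClosure_eq_rightOrth_leftOrth hS hX,
    filtClosure_eq_leftOrth_rightOrth hS hX⟩
  · intro M
    obtain ⟨n, hn⟩ := hS.2 M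
    obtain ⟨A, B, f, g, h, hT, hA, hB'⟩ := exists_triangle_filt_rightOrth_aux hB hX n M hn
    refine ⟨A, f, hA, ?_⟩
    intro A' hA' u
    obtain ⟨v, hv⟩ := Triangle.coyoneda_exact₂ _ hT u (hom_filtClosure_rightOrth hA' hB' _)
    exact ⟨v, hv.symm⟩
  · intro M
    obtain ⟨n, hn⟩ := hS.2 M
    obtain ⟨A, B, f, g, h, hT, hA, hB'⟩ := exists_triangle_leftOrth_filt_aux hB hX n M hn
    refine ⟨B, g, hB', ?_⟩
    intro B' hB'' u
    obtain ⟨v, hv⟩ := Triangle.yoneda_exact₂ _ hT u (hom_leftOrth_filtClosure hB'' hA _)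
    exact ⟨v, hv.symm⟩
end

section
/- Let T have a Serre functor ν, let S be a simple-minded system and X ⊆ S with ν(X[1]) = X. Then ν(F(X)[1]) = F(X). Moreover, for the torsion pair (^⊥X, F(X)) with minimal triangles aX → X → bX →, one has ν(aM)[1] ≅ a(νM[1]) and ν(bM)[1] ≅ b(νM[1]) for all M ∈ T. -/
open CategoryTheory Limits Pretriangulated

universe v u

variable {C : Type u} [Category.{v} C] [Preadditive C] [HasZeroObject C]
  [HasShift C ℤ] [∀ n : ℤ, (shiftFunctor C n).Additive] [Pretriangulated C]

variable (k : Type*) [Field k] [Linear k C]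

/-- `e` is a Serre duality for the auto-equivalence `ν`: natural `k`-linear
isomorphisms `Hom(X,Y) ≅ D Hom(Y, νX)`. -/
def SerreDuality (ν : C ⥤ C)
    (e : ∀ X Y : C, (X ⟶ Y) ≃ₗ[k] Module.Dual k (Y ⟶ ν.obj X)) : Prop :=
  (∀ (X' X Y : C) (u : X' ⟶ X) (g : X ⟶ Y) (h : Y ⟶ ν.obj X'),
      e X' Y (u ≫ g) h = e X Y g (h ≫ ν.map u)) ∧
  (∀ (X Y Y' : C) (g : X ⟶ Y) (v : Y ⟶ Y') (h : Y' ⟶ ν.obj X),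
      e X Y' (g ≫ v) h = e X Y g (v ≫ h))

/-- A class of objects `X` is stable under `ν ∘ [1]` (up to isomorphism):
`ν(X[1]) = X`. -/
def NuShiftStable (ν : C ⥤ C) (X : Set C) : Prop :=
  (∀ Y ∈ X, ∃ Z ∈ X, Nonempty (ν.obj (Y⟦(1:ℤ)⟧) ≅ Z)) ∧
  (∀ Z ∈ X, ∃ Y ∈ X, Nonempty (ν.obj (Y⟦(1:ℤ)⟧) ≅ Z))

section Aux14
open ZeroObject
set_option linter.unusedSectionVars false

lemma filt_iso_s14 (S : Set C) : ∀ (n : ℕ) {M N : C}, (M ≅ N) → M ∈ filt S n → N ∈ filt S n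
  | 0, M, N, e, hM => hM.of_iso e.symm
  | (n+1), M, N, e, ⟨A, B, f, g, h, hdist, hA, hB⟩ =>
    ⟨A, B, f ≫ e.hom, e.inv ≫ g, h,
      isomorphic_distinguished _ hdist _
        (Triangle.isoMk _ _ (Iso.refl _) e.symm (Iso.refl _) (by simp [Triangle.mk]) (by simp [Triangle.mk]) (by simp [Triangle.mk])),
      hA, hB⟩

variable (ν : C ⥤ C) [ν.IsEquivalence] [ν.CommShift ℤ] [ν.IsTriangulated]

/-- The functor `M ↦ ν(M⟦1⟧)`. -/
abbrev nuSh : C ⥤ C := shiftFunctor C (1:ℤ) ⋙ ν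

lemma nuSh_isZero {M : C} (hM : IsZero M) : IsZero ((nuSh ν).obj M) := by
  rw [IsZero.iff_id_eq_zero] at hM ⊢
  rw [← (nuSh ν).map_id, hM, Functor.map_zero]

lemma nuSh_isZero_rev {M : C} (hM : IsZero ((nuSh ν).obj M)) : IsZero M := by
  rw [IsZero.iff_id_eq_zero] at hM ⊢
  apply (nuSh ν).map_injective
  rw [CategoryTheory.Functor.map_id, hM, Functor.map_zero]

lemma nuSh_dist {A M B : C} (f : A ⟶ M) (g : M ⟶ B) (h : B ⟶ A⟦(1:ℤ)⟧)
    (hT : Triangle.mk f g h ∈ distTriang C) :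
    ∃ h' : (nuSh ν).obj B ⟶ ((nuSh ν).obj A)⟦(1:ℤ)⟧,
      Triangle.mk ((nuSh ν).map f) ((nuSh ν).map g) h' ∈ distTriang C := by
  have h1 := Triangle.shift_distinguished _ hT (1:ℤ)
  rw [Triangle.shiftFunctor_eq] at h1
  have h2 := ν.map_distinguished _ h1
  refine ⟨(ν.mapTriangle.obj ((Triangle.shiftFunctor C 1).obj (Triangle.mk f g h))).mor₃, ?_⟩
  refine isomorphic_distinguished _ h2 _ ?_
  refine Triangle.isoMk _ _ (Iso.refl _) ⟨-𝟙 _, -𝟙 _, by simp [Triangle.mk, Functor.mapTriangle, Triangle.shiftFunctor, Units.smul_def]; exact (Preadditive.neg_comp_neg _ _).trans (Category.comp_id _), by simp [Triangle.mk, Functor.mapTriangle, Triangle.shiftFunctor, Units.smul_def]; exact (Preadditive.neg_comp_neg _ _).trans (Category.comp_id _)⟩ (Iso.refl _) ?_ ?_ ?_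
  · dsimp
    simp [Triangle.mk, Functor.mapTriangle, Triangle.shiftFunctor, Units.smul_def]
    exact (Preadditive.comp_neg _ _).trans (congrArg _ (Category.comp_id _))
  · dsimp
    simp [Triangle.mk, Functor.mapTriangle, Triangle.shiftFunctor, Units.smul_def]
    exact ((congrArg Neg.neg ((Preadditive.neg_comp _ _).trans (congrArg Neg.neg (Category.id_comp _)))).trans (neg_neg _)).symm
  · dsimp
    simp [Triangle.mk, Functor.mapTriangle, Triangle.shiftFunctor, Units.smul_def]

lemma nuSh_filt (X : Set C) (hfor : ∀ Y ∈ X, ∃ Z ∈ X, Nonempty ((nuSh ν).obj Y ≅ Z)) :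
    ∀ n, ∀ M : C, M ∈ filt X n → (nuSh ν).obj M ∈ filt X n := by
  intro n
  induction n with
  | zero => exact fun M hM => nuSh_isZero ν hM
  | succ n ih =>
    rintro M ⟨A, B, f, g, h, hdist, hA, hB⟩
    obtain ⟨h'', hd⟩ := nuSh_dist ν f g h hdist
    have hGA : (nuSh ν).obj A ∈ filt X n := ih A hA
    rcases hB with hB | hB
    · obtain ⟨Z, hZ, ⟨e⟩⟩ := hfor B hB
      refine ⟨(nuSh ν).obj A, Z, (nuSh ν).map f, (nuSh ν).map g ≫ e.hom, e.inv ≫ h'',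
        ?_, hGA, Or.inl hZ⟩
      refine isomorphic_distinguished _ hd _ ?_
      exact Triangle.isoMk _ _ (Iso.refl _) (Iso.refl _) e.symm (by simp [Triangle.mk]) (by simp [Triangle.mk]) (by simp [Triangle.mk])
    · exact ⟨(nuSh ν).obj A, (nuSh ν).obj B, (nuSh ν).map f, (nuSh ν).map g, h'', hd, hGA,
        Or.inr (nuSh_isZero ν hB)⟩

lemma nuSh_filt_rev (X : Set C) (hrev : ∀ Z ∈ X, ∃ Y ∈ X, Nonempty ((nuSh ν).obj Y ≅ Z)) :
    ∀ n, ∀ M : C, (nuSh ν).obj M ∈ filt X n → M ∈ filt X n := by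
  intro n
  induction n with
  | zero => exact fun M hM => nuSh_isZero_rev ν hM
  | succ n ih =>
    rintro M ⟨A', B', f', g', h', hdist, hA', hB'⟩
    obtain ⟨A₀, ⟨eA⟩⟩ : ∃ A₀ : C, Nonempty ((nuSh ν).obj A₀ ≅ A') :=
      ⟨(nuSh ν).objPreimage A', ⟨(nuSh ν).objObjPreimageIso A'⟩⟩
    have hA₀ : A₀ ∈ filt X n := ih A₀ (filt_iso_s14 X n eA.symm hA')
    obtain ⟨B₀, hB₀, ⟨eB⟩⟩ :
        ∃ B₀, B₀ ∈ (X ∪ {Z : C | IsZero Z}) ∧ Nonempty ((nuSh ν).obj B₀ ≅ B') := by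
      rcases hB' with hB' | hB'
      · obtain ⟨Y, hY, he⟩ := hrev B' hB'
        exact ⟨Y, Or.inl hY, he⟩
      · exact ⟨0, Or.inr (isZero_zero C), ⟨(nuSh_isZero ν (isZero_zero C)).iso hB'⟩⟩
    let f₀ : A₀ ⟶ M := (nuSh ν).preimage (eA.hom ≫ f')
    obtain ⟨B₁, g₁, h₁, hd₁⟩ := distinguished_cocone_triangle f₀
    obtain ⟨h₂, hd₂⟩ := nuSh_dist ν f₀ g₁ h₁ hd₁
    have hd' : Triangle.mk (eA.hom ≫ f') (g' ≫ eB.inv)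
        (eB.hom ≫ h' ≫ (eA.inv)⟦(1:ℤ)⟧') ∈ distTriang C := by
      refine isomorphic_distinguished _ hdist _ ?_
      exact Triangle.isoMk _ _ eA (Iso.refl _) eB (by simp [Triangle.mk]) (by simp [Triangle.mk])
        (by simp [← Functor.map_comp, Triangle.mk])
    have hGf₀ : (nuSh ν).map f₀ = eA.hom ≫ f' := (nuSh ν).map_preimage _
    let ψ := isoTriangleOfIso₁₂ _ _ hd₂ hd' (Iso.refl _) (Iso.refl _) (by simpa [Triangle.mk] using hGf₀)
    let β : B₁ ≅ B₀ := (nuSh ν).preimageIso (Triangle.π₃.mapIso ψ)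
    refine ⟨A₀, B₀, f₀, g₁ ≫ β.hom, β.inv ≫ h₁, ?_, hA₀, hB₀⟩
    refine isomorphic_distinguished _ hd₁ _ ?_
    exact Triangle.isoMk _ _ (Iso.refl _) (Iso.refl _) β.symm (by simp [Triangle.mk]) (by simp [Triangle.mk]) (by simp [Triangle.mk])

lemma isIso_of_comps {P Q : C} (v : P ⟶ Q) (w : Q ⟶ P)
    (h1 : IsIso (v ≫ w)) (h2 : IsIso (w ≫ v)) : IsIso v := by
  have e1 : v ≫ (w ≫ inv (v ≫ w)) = 𝟙 _ := by
    rw [← Category.assoc, IsIso.hom_inv_id]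
  have e2 : (inv (w ≫ v) ≫ w) ≫ v = 𝟙 _ := by
    rw [Category.assoc, IsIso.inv_hom_id]
  have hrl : w ≫ inv (v ≫ w) = inv (w ≫ v) ≫ w := by
    calc w ≫ inv (v ≫ w) = ((inv (w ≫ v) ≫ w) ≫ v) ≫ (w ≫ inv (v ≫ w)) := by
          rw [e2, Category.id_comp]
      _ = (inv (w ≫ v) ≫ w) ≫ (v ≫ (w ≫ inv (v ≫ w))) := by
          simp only [Category.assoc]
      _ = inv (w ≫ v) ≫ w := by rw [e1, Category.comp_id]
  exact ⟨w ≫ inv (v ≫ w), e1, by rw [hrl]; exact e2⟩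

lemma minTriangle_unique {T1 T2 : Set C} {N A₁ B₁ A₂ B₂ : C}
    {f₁ : A₁ ⟶ N} {g₁ : N ⟶ B₁} {h₁ : B₁ ⟶ A₁⟦(1:ℤ)⟧}
    {f₂ : A₂ ⟶ N} {g₂ : N ⟶ B₂} {h₂ : B₂ ⟶ A₂⟦(1:ℤ)⟧}
    (H₁ : MinTriangle T1 T2 f₁ g₁ h₁) (H₂ : MinTriangle T1 T2 f₂ g₂ h₂) :
    Nonempty (A₁ ≅ A₂) ∧ Nonempty (B₁ ≅ B₂) := by
  obtain ⟨hd₁, hA₁, hB₁, happ₁, hmin₁⟩ := H₁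
  obtain ⟨hd₂, hA₂, hB₂, happ₂, hmin₂⟩ := H₂
  obtain ⟨v, hv⟩ := happ₂ A₁ hA₁ f₁
  obtain ⟨w, hw⟩ := happ₁ A₂ hA₂ f₂
  have hvw : IsIso (v ≫ w) := hmin₁ _ (by rw [Category.assoc, hw, hv])
  have hwv : IsIso (w ≫ v) := hmin₂ _ (by rw [Category.assoc, hv, hw])
  have hv' : IsIso v := isIso_of_comps v w hvw hwv
  obtain ⟨c, hc₁, hc₂⟩ := complete_distinguished_triangle_morphism _ _ hd₁ hd₂ v (𝟙 N)
    (by simpa [Triangle.mk] using hv.symm)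
  have hc : IsIso c := by
    have := isIso₃_of_isIso₁₂
      (Triangle.homMk (Triangle.mk f₁ g₁ h₁) (Triangle.mk f₂ g₂ h₂) v (𝟙 N) c
        (by simpa [Triangle.mk] using hv.symm) hc₁ hc₂) hd₁ hd₂ hv' (by exact (inferInstance : IsIso (𝟙 N)))
    exact this
  exact ⟨⟨asIso v⟩, ⟨@asIso _ _ _ _ c hc⟩⟩

lemma nuSh_minTriangle (X : Set C)
    (hfor : ∀ Y ∈ X, ∃ Z ∈ X, Nonempty ((nuSh ν).obj Y ≅ Z))
    (hrev : ∀ Z ∈ X, ∃ Y ∈ X, Nonempty ((nuSh ν).obj Y ≅ Z))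
    {A M B : C} {f : A ⟶ M} {g : M ⟶ B} {h : B ⟶ A⟦(1:ℤ)⟧}
    (H : MinTriangle (leftOrth X) (filtClosure X) f g h) :
    ∃ h₂ : (nuSh ν).obj B ⟶ ((nuSh ν).obj A)⟦(1:ℤ)⟧,
      MinTriangle (leftOrth X) (filtClosure X) ((nuSh ν).map f) ((nuSh ν).map g) h₂ := by
  obtain ⟨hd, hA, hB, happ, hmin⟩ := H
  obtain ⟨h₂, hd₂⟩ := nuSh_dist ν f g h hd
  refine ⟨h₂, hd₂, ?_, ?_, ?_, ?_⟩
  · -- (nuSh ν).obj A ∈ leftOrth X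
    intro Z hZ u
    obtain ⟨Y, hY, ⟨e⟩⟩ := hrev Z hZ
    have h0 : (nuSh ν).preimage (u ≫ e.inv) = 0 := hA Y hY _
    have : u ≫ e.inv = 0 := by
      rw [← (nuSh ν).map_preimage (u ≫ e.inv), h0, Functor.map_zero]
    rw [← Category.comp_id u, ← e.inv_hom_id, ← Category.assoc, this, Limits.zero_comp]
  · -- (nuSh ν).obj B ∈ filtClosure X
    obtain ⟨n, hn⟩ := hB
    exact ⟨n, nuSh_filt ν X hfor n B hn⟩
  · -- right approximation
    intro A'' hA'' u
    obtain ⟨eA⟩ : Nonempty ((nuSh ν).obj ((nuSh ν).objPreimage A'') ≅ A'') :=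
      ⟨(nuSh ν).objObjPreimageIso A''⟩
    set A₀ := (nuSh ν).objPreimage A''
    have hA₀ : A₀ ∈ leftOrth X := by
      intro Z hZ φ
      obtain ⟨Z', hZ', ⟨eZ⟩⟩ := hfor Z hZ
      have h0 : eA.inv ≫ (nuSh ν).map φ ≫ eZ.hom = 0 := hA'' Z' hZ' _
      have hφ : (nuSh ν).map φ = 0 := by
        have := congrArg (fun t => eA.hom ≫ t ≫ eZ.inv) h0
        simpa using this
      apply (nuSh ν).map_injective
      rw [hφ, Functor.map_zero]
    obtain ⟨v, hv⟩ := happ A₀ hA₀ ((nuSh ν).preimage (eA.hom ≫ u))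
    refine ⟨eA.inv ≫ (nuSh ν).map v, ?_⟩
    rw [Category.assoc, ← Functor.map_comp, hv, (nuSh ν).map_preimage,
      ← Category.assoc, Iso.inv_hom_id, Category.id_comp]
  · -- right minimal
    intro u hu
    have hu' : (nuSh ν).preimage u ≫ f = f := by
      apply (nuSh ν).map_injective
      rw [Functor.map_comp, (nuSh ν).map_preimage, hu]
    have := hmin _ hu'
    rw [← (nuSh ν).map_preimage u]
    infer_instance

end Aux14

/-- if `ν(X[1]) = X` then `ν(F(X)[1]) = F(X)`; moreover for the
torsion pair `(^⊥X, F(X))` with minimal triangles `aM ⟶ M ⟶ bM ⟶`, one has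
`ν(aM)[1] ≅ a(νM[1])` and `ν(bM)[1] ≅ b(νM[1])` for all `M`. -/
theorem nu_shift_filtClosure [IsTriangulated C] [HasBinaryBiproducts C] (ν : C ⥤ C) [ν.IsEquivalence] [ν.CommShift ℤ] [ν.IsTriangulated]
    (e : ∀ X Y : C, (X ⟶ Y) ≃ₗ[k] Module.Dual k (Y ⟶ ν.obj X))
    (he : SerreDuality k ν e) (hfin : ∀ X Y : C, Module.Finite k (X ⟶ Y)) [IsIdempotentComplete C]
    (S X : Set C) (hS : SimpleMindedSystem S) (hX : X ⊆ S)
    (hstab : NuShiftStable ν X) :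
    (∀ M : C, M ∈ filtClosure X ↔ ν.obj (M⟦(1:ℤ)⟧) ∈ filtClosure X) ∧
    (∀ (M A B A' B' : C) (f : A ⟶ M) (g : M ⟶ B) (h : B ⟶ A⟦(1:ℤ)⟧)
        (f' : A' ⟶ ν.obj (M⟦(1:ℤ)⟧)) (g' : ν.obj (M⟦(1:ℤ)⟧) ⟶ B')
        (h' : B' ⟶ A'⟦(1:ℤ)⟧),
      MinTriangle (leftOrth X) (filtClosure X) f g h →
      MinTriangle (leftOrth X) (filtClosure X) f' g' h' →
      Nonempty (ν.obj (A⟦(1:ℤ)⟧) ≅ A') ∧ Nonempty (ν.obj (B⟦(1:ℤ)⟧) ≅ B')) := by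
  have hfor : ∀ Y ∈ X, ∃ Z ∈ X, Nonempty ((nuSh ν).obj Y ≅ Z) := hstab.1
  have hrev : ∀ Z ∈ X, ∃ Y ∈ X, Nonempty ((nuSh ν).obj Y ≅ Z) := hstab.2
  constructor
  · intro M
    constructor
    · rintro ⟨n, hn⟩
      exact ⟨n, nuSh_filt ν X hfor n M hn⟩
    · rintro ⟨n, hn⟩
      exact ⟨n, nuSh_filt_rev ν X hrev n M hn⟩
  · intro M A B A' B' f g h f' g' h' H H'
    obtain ⟨h₂, HG⟩ := nuSh_minTriangle ν X hfor hrev H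
    exact minTriangle_unique HG H'
end
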